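/- POD subspace optimality: let u₁, …, u_m be vectors in a finite-dimensional real inner product space H of dimension n, let C = Σ_{i=1}^m u_i ⊗ u_i be the (symmetric positive semidefinite) correlation operator with eigenvalues λ₁ ≥ λ₂ ≥ … ≥ λ_n ≥ 0 and a corresponding orthonormal basis of eigenvectors φ₁, …, φ_n, and let N ≤ n. Then for V_N = span(φ₁, …, φ_N) one has Σ_{i=1}^m ‖u_i − Π_{V_N} u_i‖² = Σ_{k=N+1}^n λ_k, and for every linear subspace W ⊆ H of dimension at most N one has Σ_{i=1}^m ‖u_i − Π_W u_i‖² ≥ Σ_{k=N+1}^n λ_k, where Π_V denotes the orthogonal projection onto the subspace V. -/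

import Mathlib

open Finset in
lemma pod_aux_weight (n N : ℕ) (hN : N ≤ n) (lam t : Fin n → ℝ)
    (hdec : Antitone lam) (hpos : ∀ k, 0 ≤ lam k)
    (ht0 : ∀ k, 0 ≤ t k) (ht1 : ∀ k, t k ≤ 1) (hts : ∑ k, t k ≤ (N : ℝ)) :
    ∑ k, lam k * t k ≤ ∑ k ∈ univ.filter (fun k : Fin n => (k : ℕ) < N), lam k := by
  classical
  set A := univ.filter (fun k : Fin n => (k : ℕ) < N) with hA
  set B := univ.filter (fun k : Fin n => ¬ (k : ℕ) < N) with hB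
  set c : ℝ := if h : N < n then lam ⟨N, h⟩ else 0 with hc
  have hc0 : 0 ≤ c := by
    rw [hc]; split_ifs
    · exact hpos _
    · exact le_rfl
  have hcardA : (A.card : ℝ) = N := by
    have : A.card = (Finset.range N).card := by
      refine Finset.card_bij (fun a _ => (a : ℕ)) ?_ ?_ ?_
      · intro a ha; simp only [hA, mem_filter] at ha; simpa [Finset.mem_range] using ha.2
      · intro a ha b hb hab; exact Fin.ext hab
      · intro b hb
        refine ⟨⟨b, lt_of_lt_of_le (Finset.mem_range.mp hb) hN⟩, ?_, rfl⟩
        simp [hA, Finset.mem_range.mp hb]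
    rw [this, Finset.card_range]
  have h1 : ∑ k ∈ B, lam k * t k ≤ c * ∑ k ∈ B, t k := by
    rw [Finset.mul_sum]
    apply Finset.sum_le_sum
    intro k hk
    have hk' : N ≤ (k : ℕ) := not_lt.mp (by simpa [hB] using (Finset.mem_filter.mp hk).2)
    have hNn : N < n := lt_of_le_of_lt hk' k.isLt
    have hlk : lam k ≤ c := by
      rw [hc, dif_pos hNn]
      exact hdec (show (⟨N, hNn⟩ : Fin n) ≤ k from hk')
    exact mul_le_mul_of_nonneg_right hlk (ht0 k)
  have h2 : ∑ k ∈ A, lam k * t k ≤ ∑ k ∈ A, lam k - c * (N : ℝ) + c * ∑ k ∈ A, t k := by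
    have hstep : ∀ k ∈ A, lam k * t k ≤ lam k - c * (1 - t k) := by
      intro k hk
      have hkN : (k : ℕ) < N := by simpa [hA] using (Finset.mem_filter.mp hk).2
      have hck : c ≤ lam k := by
        rw [hc]; split_ifs with hNn
        · exact hdec (show k ≤ (⟨N, hNn⟩ : Fin n) from le_of_lt hkN)
        · exact hpos k
      nlinarith [ht0 k, ht1 k]
    calc ∑ k ∈ A, lam k * t k ≤ ∑ k ∈ A, (lam k - c * (1 - t k)) := Finset.sum_le_sum hstep
      _ = ∑ k ∈ A, lam k - c * (N : ℝ) + c * ∑ k ∈ A, t k := by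
          rw [Finset.sum_sub_distrib, ← Finset.mul_sum, Finset.sum_sub_distrib,
            Finset.sum_const, nsmul_eq_mul, mul_one, hcardA]
          ring
  have h3 : ∑ k ∈ A, t k + ∑ k ∈ B, t k = ∑ k, t k :=
    Finset.sum_filter_add_sum_filter_not univ _ t
  have h5 : ∑ k ∈ A, lam k * t k + ∑ k ∈ B, lam k * t k = ∑ k, lam k * t k :=
    Finset.sum_filter_add_sum_filter_not univ _ _
  have h7 : c * ∑ k, t k ≤ c * N := mul_le_mul_of_nonneg_left hts hc0
  have h8 : c * (∑ k ∈ A, t k + ∑ k ∈ B, t k) = c * ∑ k, t k := by rw [h3]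
  rw [mul_add] at h8
  linarith

theorem pod_subspace_optimality {H : Type*} [NormedAddCommGroup H]
    [InnerProductSpace ℝ H] [FiniteDimensional ℝ H]
    (n : ℕ) (hn : Module.finrank ℝ H = n) (m : ℕ) (u : Fin m → H)
    (φ : Fin n → H) (lam : Fin n → ℝ)
    (hφ : Orthonormal ℝ φ) (hdec : Antitone lam) (hpos : ∀ k, 0 ≤ lam k)
    (heig : ∀ k, ∑ i, (inner ℝ (u i) (φ k) : ℝ) • u i = lam k • φ k)
    (N : ℕ) (hN : N ≤ n) :
    (∑ i, ‖u i - (Submodule.orthogonalProjection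
        (Submodule.span ℝ (φ '' {k | (k : ℕ) < N})) (u i) : H)‖ ^ 2 =
      ∑ k ∈ Finset.univ.filter (fun k : Fin n => N ≤ (k : ℕ)), lam k) ∧
    (∀ W : Submodule ℝ H, Module.finrank ℝ W ≤ N →
      ∑ k ∈ Finset.univ.filter (fun k : Fin n => N ≤ (k : ℕ)), lam k ≤
        ∑ i, ‖u i - (Submodule.orthogonalProjection W (u i) : H)‖ ^ 2) := by
  classical
  rcases Nat.eq_zero_or_pos n with hn0 | hn0
  · -- degenerate case: H is trivial
    subst hn0
    have hsub : Subsingleton H := by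
      rw [← Module.finrank_zero_iff (R := ℝ)]; omega
    constructor
    · simp [Subsingleton.elim _ (0 : H)]
    · intro W _
      have : ∀ i, u i - (Submodule.orthogonalProjection W (u i) : H) = 0 := fun i => Subsingleton.elim _ _
      simp only [this]; simp
  -- main case
  haveI : Nonempty (Fin n) := ⟨⟨0, hn0⟩⟩
  have hcard : Fintype.card (Fin n) = Module.finrank ℝ H := by simp [hn]
  set b0 : Module.Basis (Fin n) ℝ H := basisOfLinearIndependentOfCardEqFinrank hφ.linearIndependent hcard
    with hb0
  have hb0c : ⇑b0 = φ := coe_basisOfLinearIndependentOfCardEqFinrank _ _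
  set b : OrthonormalBasis (Fin n) ℝ H := b0.toOrthonormalBasis (by rwa [hb0c]) with hb
  have hbc : ⇑b = φ := by rw [hb, Module.Basis.coe_toOrthonormalBasis, hb0c]
  -- inner ℝ products of φ
  have hφij : ∀ j k : Fin n, (inner ℝ (φ j) (φ k) : ℝ) = if j = k then 1 else 0 :=
    fun j k => orthonormal_iff_ite.mp hφ j k
  -- Parseval
  have parseval : ∀ v : H, ∑ k, (inner ℝ v (φ k) : ℝ) ^ 2 = ‖v‖ ^ 2 := by
    intro v
    have := b.sum_inner_mul_inner v v
    rw [hbc] at this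
    rw [← real_inner_self_eq_norm_sq, ← this]
    congr 1; ext k
    rw [sq, real_inner_comm (φ k) v]
  -- eigenvalue identity: ∑ i ⟪u i, φ k⟫² = lam k
  have hlamsum : ∀ k, ∑ i, (inner ℝ (u i) (φ k) : ℝ) ^ 2 = lam k := by
    intro k
    have h := congrArg (fun x : H => (inner ℝ x (φ k) : ℝ)) (heig k)
    simp only [sum_inner, real_inner_smul_left] at h
    rw [hφij k k, if_pos rfl, mul_one] at h
    rw [← h]
    congr 1; ext i; rw [sq]
  -- quadratic form identity
  have hCv : ∀ v : H, ∑ i, (inner ℝ (u i) v : ℝ) ^ 2 =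
      ∑ k, lam k * (inner ℝ v (φ k) : ℝ) ^ 2 := by
    intro v
    have hexp : ∀ i, (inner ℝ (u i) v : ℝ) =
        ∑ k, (inner ℝ (u i) (φ k) : ℝ) * (inner ℝ (φ k) v : ℝ) := by
      intro i
      have := b.sum_inner_mul_inner (u i) v
      rw [hbc] at this
      exact this.symm
    calc ∑ i, (inner ℝ (u i) v : ℝ) ^ 2
        = ∑ i, (∑ k, (inner ℝ (u i) (φ k) : ℝ) * (inner ℝ (φ k) v : ℝ)) * (inner ℝ (u i) v : ℝ) := by
          refine Finset.sum_congr rfl fun i _ => ?_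
          rw [sq, ← hexp i]
      _ = ∑ k, (inner ℝ (φ k) v : ℝ) * ∑ i, (inner ℝ (u i) (φ k) : ℝ) * (inner ℝ (u i) v : ℝ) := by
          simp_rw [Finset.sum_mul]
          rw [Finset.sum_comm]
          simp_rw [Finset.mul_sum]
          exact Finset.sum_congr rfl fun k _ => Finset.sum_congr rfl fun i _ => by ring
      _ = ∑ k, lam k * (inner ℝ v (φ k) : ℝ) ^ 2 := by
          refine Finset.sum_congr rfl fun k _ => ?_
          have h := congrArg (fun x : H => (inner ℝ x v : ℝ)) (heig k)
          simp only [sum_inner, real_inner_smul_left] at h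
          rw [h, sq, real_inner_comm v (φ k)]
          ring
  -- notation for coefficients
  set A := Finset.univ.filter (fun k : Fin n => (k : ℕ) < N) with hA
  set B := Finset.univ.filter (fun k : Fin n => N ≤ (k : ℕ)) with hBdef
  have hAB : ∀ f : Fin n → ℝ, ∑ k ∈ A, f k + ∑ k ∈ B, f k = ∑ k, f k := by
    intro f
    have := Finset.sum_filter_add_sum_filter_not Finset.univ
      (fun k : Fin n => (k : ℕ) < N) f
    have hBeq : B = Finset.univ.filter (fun k : Fin n => ¬ (k : ℕ) < N) := by
      rw [hBdef]
      apply Finset.filter_congr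
      intro k _
      simp [not_lt]
    rw [hA, hBeq]
    exact this
  constructor
  · -- Part 1
    set V := Submodule.span ℝ (φ '' {k | (k : ℕ) < N}) with hV
    have hproj : ∀ x : H, (Submodule.orthogonalProjection V x : H) =
        ∑ k ∈ A, (inner ℝ x (φ k) : ℝ) • φ k := by
      intro x
      apply Submodule.eq_starProjection_of_mem_of_inner_eq_zero
      · apply Submodule.sum_mem
        intro k hk
        have hkN : (k : ℕ) < N := by simpa [hA] using hk
        exact Submodule.smul_mem _ _ (Submodule.subset_span ⟨k, hkN, rfl⟩)
      · intro w hw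
        rw [hV] at hw
        induction hw using Submodule.span_induction with
        | mem y hy =>
          obtain ⟨j, hj, rfl⟩ := hy
          have hjA : j ∈ A := Finset.mem_filter.mpr ⟨Finset.mem_univ _, hj⟩
          rw [inner_sub_left, sum_inner]
          have : ∀ k ∈ A, ((inner ℝ ((inner ℝ x (φ k) : ℝ) • φ k) (φ j)) : ℝ) =
              if k = j then (inner ℝ x (φ j) : ℝ) else 0 := by
            intro k _
            rw [real_inner_smul_left, hφij k j]
            split_ifs with h
            · subst h; ring
            · ring
          rw [Finset.sum_congr rfl this, Finset.sum_ite_eq' A j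
            (fun _ => (inner ℝ x (φ j) : ℝ)), if_pos hjA]
          ring
        | zero => simp
        | add y z hy hz hy' hz' => rw [inner_add_right, hy', hz', add_zero]
        | smul a y hy hy' => rw [real_inner_smul_right, hy', mul_zero]
    have hdiff : ∀ x : H, x - (Submodule.orthogonalProjection V x : H) =
        ∑ k ∈ B, (inner ℝ x (φ k) : ℝ) • φ k := by
      intro x
      have hx : ∑ k ∈ A, (inner ℝ x (φ k) : ℝ) • φ k
          + ∑ k ∈ B, (inner ℝ x (φ k) : ℝ) • φ k = x := by
        have h1 := b.sum_repr' x
        rw [hbc] at h1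
        have h2 : ∑ k, (inner ℝ x (φ k) : ℝ) • φ k = x := by
          calc ∑ k, (inner ℝ x (φ k) : ℝ) • φ k
              = ∑ k, (inner ℝ (φ k) x : ℝ) • φ k :=
                Finset.sum_congr rfl fun k _ => by rw [real_inner_comm]
            _ = x := h1
        calc ∑ k ∈ A, (inner ℝ x (φ k) : ℝ) • φ k + ∑ k ∈ B, (inner ℝ x (φ k) : ℝ) • φ k
            = ∑ k ∈ A, (fun k => (inner ℝ x (φ k) : ℝ) • φ k) k
              + ∑ k ∈ B, (fun k => (inner ℝ x (φ k) : ℝ) • φ k) k := rfl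
          _ = ∑ k, (inner ℝ x (φ k) : ℝ) • φ k := by
              have hBeq : B = Finset.univ.filter (fun k : Fin n => ¬ (k : ℕ) < N) := by
                rw [hBdef]
                apply Finset.filter_congr
                intro k _
                simp [not_lt]
              rw [hA, hBeq]
              exact Finset.sum_filter_add_sum_filter_not Finset.univ _ _
          _ = x := h2
      rw [hproj x]
      exact sub_eq_iff_eq_add'.mpr hx.symm
    have hnormdiff : ∀ x : H, ‖x - (Submodule.orthogonalProjection V x : H)‖ ^ 2 =
        ∑ k ∈ B, (inner ℝ x (φ k) : ℝ) ^ 2 := by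
      intro x
      rw [hdiff x, ← real_inner_self_eq_norm_sq,
        hφ.inner_sum (fun k => (inner ℝ x (φ k) : ℝ)) (fun k => (inner ℝ x (φ k) : ℝ)) B]
      exact Finset.sum_congr rfl fun k _ => by simp [sq]
    calc ∑ i, ‖u i - (Submodule.orthogonalProjection V (u i) : H)‖ ^ 2
        = ∑ i, ∑ k ∈ B, (inner ℝ (u i) (φ k) : ℝ) ^ 2 :=
          Finset.sum_congr rfl fun i _ => hnormdiff (u i)
      _ = ∑ k ∈ B, ∑ i, (inner ℝ (u i) (φ k) : ℝ) ^ 2 := Finset.sum_comm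
      _ = ∑ k ∈ B, lam k := Finset.sum_congr rfl fun k _ => hlamsum k
  · -- Part 2
    intro W hW
    set d := Module.finrank ℝ W with hd
    set e := stdOrthonormalBasis ℝ W with he
    set E : Fin d → H := fun j => (e j : H) with hE'
    have hE : Orthonormal ℝ E := by
      rw [orthonormal_iff_ite]
      intro i j
      have := orthonormal_iff_ite.mp e.orthonormal i j
      rwa [Submodule.coe_inner] at this
    have hEnorm : ∀ j, ‖E j‖ = 1 := hE.1
    have hWproj : ∀ x : H, (Submodule.orthogonalProjection W x : H) =
        ∑ j, (inner ℝ (E j) x : ℝ) • E j := by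
      intro x
      rw [Submodule.orthogonalProjection, e.orthogonalProjectionOnto_apply_eq_sum x]
      push_cast
      rfl
    have hWnorm : ∀ x : H, ‖(Submodule.orthogonalProjection W x : H)‖ ^ 2 =
        ∑ j, (inner ℝ (E j) x : ℝ) ^ 2 := by
      intro x
      rw [hWproj x, ← real_inner_self_eq_norm_sq,
        hE.inner_sum (fun j => (inner ℝ (E j) x : ℝ)) (fun j => (inner ℝ (E j) x : ℝ)) Finset.univ]
      exact Finset.sum_congr rfl fun j _ => by simp [sq]
    have hpyth : ∀ x : H, ‖x - (Submodule.orthogonalProjection W x : H)‖ ^ 2 =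
        ‖x‖ ^ 2 - ‖(Submodule.orthogonalProjection W x : H)‖ ^ 2 := by
      intro x
      have h := Submodule.norm_sq_eq_add_norm_sq_projection x W
      have h2 : ((Submodule.orthogonalProjection Wᗮ x : W ᗮ) : H) = x - Submodule.orthogonalProjection W x :=
        Submodule.starProjection_orthogonal_val x
      have h3 : ‖Submodule.orthogonalProjection Wᗮ x‖ = ‖x - (Submodule.orthogonalProjection W x : H)‖ := by
        rw [← h2]; rfl
      have h4 : ‖Submodule.orthogonalProjection W x‖ = ‖(Submodule.orthogonalProjection W x : H)‖ := rfl
      simp only [Submodule.orthogonalProjection] at h3 h4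
      rw [h3, h4] at h
      linarith
    -- total energy
    have htot : ∑ i, ‖u i‖ ^ 2 = ∑ k, lam k := by
      calc ∑ i, ‖u i‖ ^ 2 = ∑ i, ∑ k, (inner ℝ (u i) (φ k) : ℝ) ^ 2 :=
            Finset.sum_congr rfl fun i _ => (parseval (u i)).symm
        _ = ∑ k, ∑ i, (inner ℝ (u i) (φ k) : ℝ) ^ 2 := Finset.sum_comm
        _ = ∑ k, lam k := Finset.sum_congr rfl fun k _ => hlamsum k
    set t : Fin n → ℝ := fun k => ∑ j, (inner ℝ (E j) (φ k) : ℝ) ^ 2 with ht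
    have hprojsum : ∑ i, ‖(Submodule.orthogonalProjection W (u i) : H)‖ ^ 2 = ∑ k, lam k * t k := by
      calc ∑ i, ‖(Submodule.orthogonalProjection W (u i) : H)‖ ^ 2
          = ∑ i, ∑ j, (inner ℝ (E j) (u i) : ℝ) ^ 2 :=
            Finset.sum_congr rfl fun i _ => hWnorm (u i)
        _ = ∑ j, ∑ i, (inner ℝ (u i) (E j) : ℝ) ^ 2 := by
            rw [Finset.sum_comm]
            exact Finset.sum_congr rfl fun j _ =>
              Finset.sum_congr rfl fun i _ => by rw [real_inner_comm]
        _ = ∑ j, ∑ k, lam k * (inner ℝ (E j) (φ k) : ℝ) ^ 2 := by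
            refine Finset.sum_congr rfl fun j _ => ?_
            rw [hCv (E j)]
        _ = ∑ k, lam k * t k := by
            rw [Finset.sum_comm]
            exact Finset.sum_congr rfl fun k _ => by rw [ht, Finset.mul_sum]
    have ht0 : ∀ k, 0 ≤ t k := fun k => Finset.sum_nonneg fun j _ => sq_nonneg _
    have ht1 : ∀ k, t k ≤ 1 := by
      intro k
      have hb1 := hE.sum_inner_products_le (φ k) (s := Finset.univ)
      have hφ1 : ‖φ k‖ = 1 := hφ.1 k
      rw [hφ1] at hb1
      calc t k = ∑ j, ‖(inner ℝ (E j) (φ k) : ℝ)‖ ^ 2 :=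
            Finset.sum_congr rfl fun j _ => by rw [Real.norm_eq_abs, sq_abs]
        _ ≤ 1 ^ 2 := hb1
        _ = 1 := one_pow 2
    have hts : ∑ k, t k ≤ (N : ℝ) := by
      have : ∑ k, t k = (d : ℝ) := by
        calc ∑ k, t k = ∑ j, ∑ k, (inner ℝ (E j) (φ k) : ℝ) ^ 2 := Finset.sum_comm
          _ = ∑ j : Fin d, (1 : ℝ) := by
              refine Finset.sum_congr rfl fun j _ => ?_
              rw [parseval (E j), hEnorm j, one_pow]
          _ = (d : ℝ) := by simp
      rw [this]
      exact_mod_cast hW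
    have hkey : ∑ k, lam k * t k ≤ ∑ k ∈ A, lam k := by
      rw [hA]
      exact pod_aux_weight n N hN lam t hdec hpos ht0 ht1 hts
    have hfinal : ∑ i, ‖u i - (Submodule.orthogonalProjection W (u i) : H)‖ ^ 2
        = ∑ k, lam k - ∑ k, lam k * t k := by
      calc ∑ i, ‖u i - (Submodule.orthogonalProjection W (u i) : H)‖ ^ 2
          = ∑ i, (‖u i‖ ^ 2 - ‖(Submodule.orthogonalProjection W (u i) : H)‖ ^ 2) :=
            Finset.sum_congr rfl fun i _ => hpyth (u i)
        _ = ∑ i, ‖u i‖ ^ 2 - ∑ i, ‖(Submodule.orthogonalProjection W (u i) : H)‖ ^ 2 :=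
            Finset.sum_sub_distrib _ _
        _ = ∑ k, lam k - ∑ k, lam k * t k := by rw [htot, hprojsum]
    have hABlam := hAB lam
    rw [hfinal]
    linarith
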